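/- arXiv:1112.5649 — 4 statements merged into one kernel-verified Lean document; each statement's English description precedes it below -/
import Mathlib

section
/- The piecewise linear traffic flux satisfies Zhang's second anisotropy condition: for all 0 < ρ_l < ρ_r ≤ 1, min(f(ρ_l)/ρ_l, f(ρ_r)/ρ_r) ≥ (f(ρ_r) − f(ρ_l))/(ρ_r − ρ_l). -/
theorem stmt_2 (ρm γ : ℝ) (hρm : 0 < ρm) (hρm1 : ρm < 1)
    (hγ : 0 < γ) (hγ' : γ < ρm / (1 - ρm))
    (f : ℝ → ℝ) (hf : ∀ ρ, f ρ = if ρ < ρm then ρ else γ * (1 - ρ)) :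
    ∀ ρl ρr : ℝ, 0 < ρl → ρl < ρr → ρr ≤ 1 →
      min (f ρl / ρl) (f ρr / ρr) ≥ (f ρr - f ρl) / (ρr - ρl) := by
  intro ρl ρr hl hlr hr1
  have h1m : (0:ℝ) < 1 - ρm := by linarith
  have hγm : γ * (1 - ρm) < ρm := by
    rw [lt_div_iff₀ h1m] at hγ'; exact hγ'
  have hr : 0 < ρr := lt_trans hl hlr
  have hd : 0 < ρr - ρl := by linarith
  rw [hf ρl, hf ρr, ge_iff_le, le_min_iff]
  by_cases hlm : ρl < ρm
  · by_cases hrm : ρr < ρm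
    · simp only [if_pos hlm, if_pos hrm]
      rw [div_self hl.ne', div_self hr.ne', div_le_one hd]
      constructor <;> linarith
    · simp only [if_pos hlm, if_neg hrm]
      push_neg at hrm
      have h1 : γ * (1 - ρr) ≤ ρr := by nlinarith
      constructor
      · rw [div_le_div_iff₀ hd hl]
        nlinarith
      · rw [div_le_div_iff₀ hd hr]
        nlinarith
  · push_neg at hlm
    have hrm : ¬ ρr < ρm := by push_neg; linarith
    simp only [if_neg (not_lt.mpr hlm), if_neg hrm]
    have key : (γ * (1 - ρr) - γ * (1 - ρl)) / (ρr - ρl) = -γ := by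
      field_simp; ring
    rw [key]
    have h1l : 0 ≤ 1 - ρl := by linarith
    have h1r : 0 ≤ 1 - ρr := by linarith
    constructor
    · exact le_trans (by linarith) (div_nonneg (by positivity) hl.le)
    · exact le_trans (by linarith) (div_nonneg (by positivity) hr.le)
end

section
/- Define the quartic P(y) = −y⁴/ε² + 3y² + M·y − ε² with M > 0 fixed. Then for all sufficiently small ε > 0, P has exactly one root in the interval [−ε, ε], and this root equals ε²/M + O(ε³); moreover P(y) < 0 for y ∈ [−ε, ε] below the root and P(y) > 0 above it. -/
set_option maxHeartbeats 1000000

theorem stmt_9 (M : ℝ) (hM : 0 < M)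
    (P : ℝ → ℝ → ℝ)
    (hP : ∀ ε y, P ε y = -(1 / ε ^ 2) * y ^ 4 + 3 * y ^ 2 + M * y - ε ^ 2) :
    ∃ Cr > 0, ∃ ε0 > 0, ∀ ε : ℝ, 0 < ε → ε < ε0 →
      ∃! y : ℝ, y ∈ Set.Icc (-ε) ε ∧ P ε y = 0 ∧
        |y - ε ^ 2 / M| ≤ Cr * ε ^ 3 ∧
        (∀ z ∈ Set.Icc (-ε) ε, z < y → P ε z < 0) ∧
        (∀ z ∈ Set.Icc (-ε) ε, y < z → 0 < P ε z) := by
  refine ⟨1, one_pos, min (M/10) (min 1 (M^3/(6+6*M^2))), by positivity, ?_⟩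
  intro ε hε hεlt
  have hε1 : ε < M/10 := lt_of_lt_of_le hεlt (min_le_left _ _)
  have hε2 : ε < 1 := lt_of_lt_of_le hεlt ((min_le_right _ _).trans (min_le_left _ _))
  have hε3 : ε < M^3/(6+6*M^2) := lt_of_lt_of_le hεlt ((min_le_right _ _).trans (min_le_right _ _))
  have hε3' : ε * (6 + 6*M^2) < M^3 := by
    rw [lt_div_iff₀ (by positivity)] at hε3; linarith
  have hεM : ε < M := by linarith
  have hε2pos : (0:ℝ) < ε^2 := by positivity
  -- strict monotonicity on [-ε, ε]
  have hmono : ∀ y z : ℝ, y ∈ Set.Icc (-ε) ε → z ∈ Set.Icc (-ε) ε → y < z →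
      P ε y < P ε z := by
    intro y z ⟨hy1, hy2⟩ ⟨hz1, hz2⟩ hyz
    rw [hP, hP]
    have hz3 : z^3 ≤ ε^3 := by nlinarith [sq_nonneg (2*z+ε), sq_nonneg (z-ε)]
    have hy3 : y^3 ≤ ε^3 := by nlinarith [sq_nonneg (2*y+ε), sq_nonneg (y-ε)]
    have hzy1 : z^2*y ≤ ε^3 := by nlinarith [sq_nonneg z, sq_nonneg (z-ε), sq_nonneg (z+ε)]
    have hzy2 : z*y^2 ≤ ε^3 := by nlinarith [sq_nonneg y, sq_nonneg (y-ε), sq_nonneg (y+ε)]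
    have hsum : z^3 + z^2*y + z*y^2 + y^3 ≤ 4*ε^3 := by linarith
    have h4 : z^4 - y^4 ≤ 4*ε^3*(z-y) := by
      calc z^4 - y^4 = (z-y)*(z^3+z^2*y+z*y^2+y^3) := by ring
        _ ≤ (z-y)*(4*ε^3) := mul_le_mul_of_nonneg_left hsum (by linarith)
        _ = 4*ε^3*(z-y) := by ring
    have hc : -(1/ε^2) * (z^4 - y^4) ≥ -(1/ε^2) * (4*ε^3*(z-y)) := by
      have : (0:ℝ) < 1/ε^2 := by positivity
      nlinarith
    have he : -(1/ε^2) * (4*ε^3*(z-y)) = -(4*ε*(z-y)) := by field_simp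
    rw [he] at hc
    have h6 : -(2*ε)*(z-y) ≤ (z+y)*(z-y) :=
      mul_le_mul_of_nonneg_right (by linarith) (by linarith)
    have h7 : 0 < (M - 10*ε)*(z-y) :=
      mul_pos (by linarith) (by linarith)
    nlinarith [hc, h6, h7]
  -- continuity
  have hcont : ContinuousOn (P ε) (Set.Icc (-ε) ε) := by
    have : P ε = fun y => -(1 / ε ^ 2) * y ^ 4 + 3 * y ^ 2 + M * y - ε ^ 2 :=
      funext (hP ε)
    rw [this]; fun_prop
  -- endpoint values
  have hPa : P ε (-ε) < 0 := by
    rw [hP]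
    have : (1/ε^2) * (-ε)^4 = ε^2 := by field_simp
    nlinarith
  have hPb : 0 < P ε ε := by
    rw [hP]
    have : (1/ε^2) * ε^4 = ε^2 := by field_simp
    nlinarith
  obtain ⟨y, hyI, hy0⟩ := intermediate_value_Icc (by linarith : -ε ≤ ε) hcont
    ⟨hPa.le, hPb.le⟩
  -- bracketing points
  have hbε : ε^2/M ≤ ε := by
    rw [div_le_iff₀ hM]; nlinarith
  have hb0 : (0:ℝ) ≤ ε^2/M := by positivity
  have hε3pos : (0:ℝ) < ε^3 := by positivity
  have hε3le : ε^3 ≤ ε := by nlinarith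
  have haI : ε^2/M - ε^3 ∈ Set.Icc (-ε) ε := by
    constructor
    · linarith
    · linarith
  have hbI : ε^2/M ∈ Set.Icc (-ε) ε := ⟨by linarith, hbε⟩
  have hPa' : P ε (ε^2/M - ε^3) < 0 := by
    rw [hP]
    have h1 : -(1/ε^2) * (ε^2/M - ε^3)^4 ≤ 0 := by
      have hpos : (0:ℝ) ≤ (1/ε^2) * (ε^2/M - ε^3)^4 := by positivity
      linarith
    have h2 : M * (ε^2/M - ε^3) = ε^2 - M*ε^3 := by
      rw [mul_sub, mul_div_cancel₀ _ hM.ne']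
    have h3 : 3 * (ε^2/M - ε^3)^2 < M * ε^3 := by
      have hx : (ε^2/M)^2 = ε^4/M^2 := by ring
      have ha2 : (ε^2/M - ε^3)^2 ≤ 2*(ε^4/M^2) + 2*ε^6 := by
        nlinarith [sq_nonneg (ε^2/M + ε^3), hx]
      have key : 6*ε^4 + 6*ε^6*M^2 < M^3*ε^3 := by
        have h5 := mul_lt_mul_of_pos_right hε3' hε3pos
        have h6 : ε^6 ≤ ε^4 := pow_le_pow_of_le_one hε.le hε2.le (by norm_num)
        nlinarith [sq_nonneg M]
      have hlt : 6*(ε^4/M^2) + 6*ε^6 < M*ε^3 := by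
        rw [show (6:ℝ)*(ε^4/M^2)+6*ε^6 = (6*ε^4+6*ε^6*M^2)/M^2 by field_simp,
          div_lt_iff₀ (by positivity : (0:ℝ) < M^2)]
        nlinarith
      linarith
    linarith
  have hPb' : 0 < P ε (ε^2/M) := by
    rw [hP]
    have h1 : (1/ε^2) * (ε^2/M)^4 = ε^6/M^4 := by field_simp
    have h2 : M * (ε^2/M) = ε^2 := by field_simp
    have h3 : ε^6/M^4 < 3*(ε^2/M)^2 := by
      rw [div_lt_iff₀ (by positivity : (0:ℝ) < M^4),
        show (3:ℝ)*(ε^2/M)^2 = 3*ε^4/M^2 by ring,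
        div_mul_eq_mul_div, lt_div_iff₀ (by positivity : (0:ℝ) < M^2)]
      have h4 : ε^2 < M^2 := by nlinarith
      nlinarith [mul_pos (pow_pos hε 4) (pow_pos hM 2), h4]
    linarith
  have hay : ε^2/M - ε^3 < y := by
    by_contra h
    push_neg at h
    rcases h.lt_or_eq with h | h
    · have := hmono y _ hyI haI h
      rw [hy0] at this; linarith
    · rw [← h] at hPa'; rw [hy0] at hPa'; linarith
  have hyb : y < ε^2/M := by
    by_contra h
    push_neg at h
    rcases h.lt_or_eq with h | h
    · have := hmono _ y hbI hyI h
      rw [hy0] at this; linarith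
    · rw [h] at hPb'; rw [hy0] at hPb'; linarith
  refine ⟨y, ⟨hyI, hy0, ?_, ?_, ?_⟩, ?_⟩
  · rw [abs_le]; constructor <;> [linarith; linarith]
  · intro z hz hzy
    have := hmono z y hz hyI hzy
    rwa [hy0] at this
  · intro z hz hyz
    have := hmono y z hyI hz hyz
    rwa [hy0] at this
  · rintro y' ⟨hy'I, hy'0, -, -, -⟩
    rcases lt_trichotomy y' y with h | h | h
    · have := hmono y' y hy'I hyI h
      rw [hy0, hy'0] at this; linarith
    · exact h
    · have := hmono y y' hyI hy'I h
      rw [hy0, hy'0] at this; linarith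
end

section
/- In Case B (γ/(γ+1) < ρ_l < ρ_m), the shock speed s = (g_c(ρ_m) − f(ρ_l))/(ρ_m − ρ_l) = (γ(1−ρ_m) − ρ_l)/(ρ_m − ρ_l) is strictly negative, and moreover s < −γ so the 1-shock is slower than the 2-contact of speed −γ. -/
theorem stmt_12 (ρm γ ρl : ℝ) (hρm : 0 < ρm) (hρm1 : ρm < 1)
    (hγ : 0 < γ) (hγ' : γ < ρm / (1 - ρm))
    (hl : γ / (γ + 1) < ρl) (hl' : ρl < ρm) :
    (γ * (1 - ρm) - ρl) / (ρm - ρl) < 0 ∧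
    (γ * (1 - ρm) - ρl) / (ρm - ρl) < -γ := by
  have hden : 0 < ρm - ρl := by linarith
  have h1 : γ < ρl * (γ + 1) := by
    rw [div_lt_iff₀ (by linarith)] at hl; linarith
  have hnum : γ * (1 - ρm) - ρl < 0 := by nlinarith
  refine ⟨div_neg_of_neg_of_pos hnum hden, ?_⟩
  rw [div_lt_iff₀ hden]
  nlinarith
end

section
/- Let φ : (0,∞) → (0,∞) with φ(ε) = o(ε) as ε → 0. Then ∫_{ρ_m−ε}^{ρ_m−ε+φ(ε)} η_ε(s−ρ_m) ds ≤ φ(ε)·η_ε(φ(ε)−ε) = O(φ(ε)/ε·η((φ(ε)−ε)/ε)) → 0 as ε → 0; consequently f_ε(ρ_m − ε + φ(ε)) → ρ_m as ε → 0. -/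
open intervalIntegral Filter Topology

theorem stmt_18 (ρm γ : ℝ) (hρm : 0 < ρm) (hρm1 : ρm < 1) (hγ : 0 < γ)
    (η : ℝ → ℝ)
    (hnn : ∀ s, 0 ≤ η s)
    (hcont : Continuous η)
    (hsupp : ∀ s : ℝ, 1 ≤ |s| → η s = 0)
    (hmono : MonotoneOn η (Set.Icc (-1 : ℝ) 0))
    (ηε : ℝ → ℝ → ℝ) (hηε : ∀ ε s, ηε ε s = (1 / ε) * η (s / ε))
    (fε : ℝ → ℝ → ℝ)
    (hfε : ∀ ε ρ, fε ε ρ = ρ + (γ - (γ + 1) * ρ) * ∫ s in (ρm - ε)..ρ, ηε ε (s - ρm))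
    (φ : ℝ → ℝ) (hφpos : ∀ ε : ℝ, 0 < ε → 0 < φ ε)
    (hφo : Tendsto (fun ε => φ ε / ε) (nhdsWithin 0 (Set.Ioi 0)) (nhds 0)) :
    (∀ᶠ ε in nhdsWithin 0 (Set.Ioi 0),
      (∫ s in (ρm - ε)..(ρm - ε + φ ε), ηε ε (s - ρm)) ≤ φ ε * ηε ε (φ ε - ε)) ∧
    Tendsto (fun ε => ∫ s in (ρm - ε)..(ρm - ε + φ ε), ηε ε (s - ρm))
      (nhdsWithin 0 (Set.Ioi 0)) (nhds 0) ∧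
    Tendsto (fun ε => fε ε (ρm - ε + φ ε)) (nhdsWithin 0 (Set.Ioi 0)) (nhds ρm) := by
  -- eventually ε > 0 and φ ε ≤ ε
  have hev : ∀ᶠ ε in nhdsWithin (0:ℝ) (Set.Ioi 0), 0 < ε ∧ φ ε ≤ ε := by
    filter_upwards [self_mem_nhdsWithin,
      hφo.eventually (gt_mem_nhds (show (0:ℝ) < 1 by norm_num))] with ε hε h1
    refine ⟨hε, ?_⟩
    have := (div_lt_one hε).mp h1
    linarith
  -- the key pointwise bound
  have key : ∀ ε : ℝ, 0 < ε → φ ε ≤ ε →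
      (∫ s in (ρm - ε)..(ρm - ε + φ ε), ηε ε (s - ρm)) ≤ φ ε * ηε ε (φ ε - ε) := by
    intro ε hε hφε
    have hφnn := (hφpos ε hε).le
    have hab : ρm - ε ≤ ρm - ε + φ ε := by linarith
    have hfun : (fun s => ηε ε (s - ρm)) = fun s => (1 / ε) * η ((s - ρm) / ε) :=
      funext fun s => hηε ε _
    have hint : IntervalIntegrable (fun s => ηε ε (s - ρm)) MeasureTheory.volume
        (ρm - ε) (ρm - ε + φ ε) := by
      rw [hfun]
      exact (continuous_const.mul
        (hcont.comp ((continuous_id.sub continuous_const).div_const ε))).intervalIntegrable _ _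
    have hbd : ∀ s ∈ Set.Icc (ρm - ε) (ρm - ε + φ ε),
        ηε ε (s - ρm) ≤ ηε ε (φ ε - ε) := by
      intro s hs
      rw [hηε, hηε]
      have h1 : (s - ρm) / ε ∈ Set.Icc (-1 : ℝ) 0 := by
        constructor
        · rw [le_div_iff₀ hε]; linarith [hs.1]
        · rw [div_le_iff₀ hε]; nlinarith [hs.2]
      have h2 : (φ ε - ε) / ε ∈ Set.Icc (-1 : ℝ) 0 := by
        constructor
        · rw [le_div_iff₀ hε]; linarith
        · rw [div_le_iff₀ hε]; nlinarith
      have hle : (s - ρm) / ε ≤ (φ ε - ε) / ε :=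
        (div_le_div_iff_of_pos_right hε).mpr (by linarith [hs.2])
      exact mul_le_mul_of_nonneg_left (hmono h1 h2 hle) (by positivity)
    calc (∫ s in (ρm - ε)..(ρm - ε + φ ε), ηε ε (s - ρm))
        ≤ ∫ _s in (ρm - ε)..(ρm - ε + φ ε), ηε ε (φ ε - ε) :=
          intervalIntegral.integral_mono_on hab hint intervalIntegrable_const hbd
      _ = φ ε * ηε ε (φ ε - ε) := by
          rw [intervalIntegral.integral_const, smul_eq_mul]; ring
  have hP1 : ∀ᶠ ε in nhdsWithin (0:ℝ) (Set.Ioi 0),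
      (∫ s in (ρm - ε)..(ρm - ε + φ ε), ηε ε (s - ρm)) ≤ φ ε * ηε ε (φ ε - ε) := by
    filter_upwards [hev] with ε ⟨hε, hφε⟩ using key ε hε hφε
  -- bound tends to 0
  have hg : Tendsto (fun ε => φ ε * ηε ε (φ ε - ε)) (nhdsWithin (0:ℝ) (Set.Ioi 0)) (nhds 0) := by
    have hF : Tendsto (fun t : ℝ => t * η (t - 1)) (nhds 0) (nhds 0) := by
      have hc : Continuous (fun t : ℝ => t * η (t - 1)) :=
        continuous_id.mul (hcont.comp (continuous_id.sub continuous_const))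
      simpa using hc.tendsto 0
    refine (hF.comp hφo).congr' ?_
    filter_upwards [self_mem_nhdsWithin] with ε (hε : 0 < ε)
    have hεne : ε ≠ 0 := hε.ne'
    show φ ε / ε * η (φ ε / ε - 1) = φ ε * ηε ε (φ ε - ε)
    rw [hηε]
    have : (φ ε - ε) / ε = φ ε / ε - 1 := by field_simp
    rw [this]; ring
  have hInn : ∀ᶠ ε in nhdsWithin (0:ℝ) (Set.Ioi 0),
      0 ≤ ∫ s in (ρm - ε)..(ρm - ε + φ ε), ηε ε (s - ρm) := by
    filter_upwards [self_mem_nhdsWithin] with ε (hε : 0 < ε)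
    refine intervalIntegral.integral_nonneg (by linarith [(hφpos ε hε).le]) fun s _ => ?_
    rw [hηε]
    exact mul_nonneg (by positivity) (hnn _)
  have hI : Tendsto (fun ε => ∫ s in (ρm - ε)..(ρm - ε + φ ε), ηε ε (s - ρm))
      (nhdsWithin (0:ℝ) (Set.Ioi 0)) (nhds 0) :=
    tendsto_of_tendsto_of_tendsto_of_le_of_le' tendsto_const_nhds hg hInn hP1
  refine ⟨hP1, hI, ?_⟩
  -- φ → 0
  have hid : Tendsto (fun ε : ℝ => ε) (nhdsWithin (0:ℝ) (Set.Ioi 0)) (nhds 0) :=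
    Filter.tendsto_id.mono_left nhdsWithin_le_nhds
  have hφ0 : Tendsto φ (nhdsWithin (0:ℝ) (Set.Ioi 0)) (nhds 0) := by
    have h := hφo.mul hid
    rw [mul_zero] at h
    refine h.congr' ?_
    filter_upwards [self_mem_nhdsWithin] with ε (hε : 0 < ε)
    exact div_mul_cancel₀ _ hε.ne'
  have hx : Tendsto (fun ε => ρm - ε + φ ε) (nhdsWithin (0:ℝ) (Set.Ioi 0)) (nhds ρm) := by
    have h : Tendsto (fun ε : ℝ => ρm - ε + φ ε) (nhdsWithin (0:ℝ) (Set.Ioi 0))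
        (nhds (ρm - 0 + 0)) := ((tendsto_const_nhds (x := ρm)).sub hid).add hφ0
    simpa using h
  have hcoef : Tendsto (fun ε => γ - (γ + 1) * (ρm - ε + φ ε))
      (nhdsWithin (0:ℝ) (Set.Ioi 0)) (nhds (γ - (γ + 1) * ρm)) :=
    tendsto_const_nhds.sub (tendsto_const_nhds.mul hx)
  have h := hx.add (hcoef.mul hI)
  rw [mul_zero, add_zero] at h
  exact h.congr fun ε => (hfε ε _).symm
end
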